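/- Fix a partition μ = (μ_1,...,μ_p) of n and let OP_n(μ) be the set of ordered set partitions of [n] in which, for each j, the elements of the j-th batch {μ_1+...+μ_{j-1}+1, ..., μ_1+...+μ_j} appear in increasing order when reading the ordered set partition from left to right (reading within each block in increasing order). Then #OP_n(μ) = ∑_{0 ≤ γ ≤ μ} ∏_{j=1}^p C((μ_1-γ_1)+...+(μ_j-γ_j), μ_j-γ_j) · C((μ_1-γ_1)+...+(μ_{j-1}-γ_{j-1})+μ_j-1, γ_j), where the sum is over integer sequences γ with 0 ≤ γ_j ≤ μ_j for all j. -/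

import Mathlib

/-- The index (0-based) of the batch (interval of `μ = (μ_1,…,μ_p)`)
containing the (0-based) position `i`. -/
noncomputable def batchOf (p : ℕ) (μ : Fin p → ℕ) (i : ℕ) : ℕ :=
  sInf {j : ℕ | i < ∑ l ∈ Finset.range (j + 1), if h : l < p then μ ⟨l, h⟩ else 0}

namespace OPAux

open Finset


open Finset

variable {k : ℕ}

/-- partial sums of a tuple, with ℕ index -/
def pSum (k : ℕ) (c : Fin k → ℕ) (t : ℕ) : ℕ :=
  ∑ l ∈ Finset.range t, if h : l < k then c ⟨l, h⟩ else 0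

/-- index of the block containing position `x` -/
noncomputable def idxOf (k : ℕ) (c : Fin k → ℕ) (x : ℕ) : ℕ :=
  sInf {j : ℕ | x < pSum k c (j + 1)}

lemma batchOf_eq_idxOf (p : ℕ) (μ : Fin p → ℕ) (i : ℕ) :
    batchOf p μ i = idxOf p μ i := rfl

lemma pSum_mono (c : Fin k → ℕ) : Monotone (pSum k c) := by
  intro s t hst
  exact Finset.sum_le_sum_of_subset (Finset.range_subset_range.2 hst)

lemma pSum_succ (c : Fin k → ℕ) {t : ℕ} (h : t < k) :
    pSum k c (t + 1) = pSum k c t + c ⟨t, h⟩ := by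
  rw [pSum, Finset.sum_range_succ, dif_pos h]; rfl

lemma pSum_succ_of_ge (c : Fin k → ℕ) {t : ℕ} (h : k ≤ t) :
    pSum k c (t + 1) = pSum k c t := by
  rw [pSum, Finset.sum_range_succ, dif_neg (by omega)]; rfl

lemma pSum_self (c : Fin k → ℕ) : pSum k c k = ∑ i, c i := by
  rw [pSum]
  rw [← Fin.sum_univ_eq_sum_range (fun l => if h : l < k then c ⟨l, h⟩ else 0) k]
  apply Finset.sum_congr rfl
  intro i _
  rw [dif_pos i.2]

lemma pSum_le (c : Fin k → ℕ) (t : ℕ) : pSum k c t ≤ ∑ i, c i := by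
  rcases le_or_gt t k with h | h
  · rw [← pSum_self]; exact pSum_mono c h
  · have : ∀ s, pSum k c (k + s) = pSum k c k := by
      intro s; induction s with
      | zero => rfl
      | succ s ih => rw [← Nat.add_assoc, pSum_succ_of_ge c (by omega), ih]
    have h2 := this (t - k)
    rw [(by omega : k + (t - k) = t)] at h2
    rw [h2, pSum_self]

lemma pSum_coe (c : Fin k → ℕ) (j : Fin k) :
    pSum k c (j : ℕ) = ∑ l ∈ univ.filter (fun l => l < j), c l := by
  have h1 : pSum k c (j : ℕ)
      = ∑ l ∈ Finset.range (j : ℕ),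
          (if l < (j : ℕ) then (if h : l < k then c ⟨l, h⟩ else 0) else 0) := by
    apply Finset.sum_congr rfl
    intro l hl
    rw [if_pos (Finset.mem_range.1 hl)]
  rw [h1]
  rw [Finset.sum_subset (Finset.range_subset_range.2 j.2.le)
    (by intro l _ hl; rw [if_neg (by simpa using hl)])]
  rw [← Fin.sum_univ_eq_sum_range
    (fun l => if l < (j : ℕ) then (if h : l < k then c ⟨l, h⟩ else 0) else 0) k]
  rw [Finset.sum_filter]
  apply Finset.sum_congr rfl
  intro l _
  by_cases h : l < j
  · rw [if_pos (by exact h), if_pos h, dif_pos l.2]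
  · rw [if_neg (by exact h), if_neg h]


lemma idxOf_spec (c : Fin k → ℕ) (j : Fin k) {x : ℕ} (hx : x < c j) :
    idxOf k c (pSum k c (j : ℕ) + x) = j := by
  have hmem : (j : ℕ) ∈ {t : ℕ | pSum k c (j : ℕ) + x < pSum k c (t + 1)} := by
    have := pSum_succ c j.2
    simp only [Set.mem_setOf_eq, Fin.eta] at *
    omega
  refine le_antisymm (Nat.sInf_le hmem) ?_
  refine le_csInf ⟨_, hmem⟩ ?_
  intro b hb
  by_contra hbj
  push_neg at hbj
  have h2 : pSum k c (b + 1) ≤ pSum k c (j : ℕ) := pSum_mono c (by omega)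
  simp only [Set.mem_setOf_eq] at hb
  omega

lemma idxOf_lt (c : Fin k → ℕ) {x : ℕ} (hx : x < ∑ i, c i) :
    idxOf k c x < k ∧ pSum k c (idxOf k c x) ≤ x ∧ x < pSum k c (idxOf k c x + 1) := by
  have hk : 0 < k := by
    by_contra h
    have : (∑ i, c i) = 0 := by
      have hk0 : k = 0 := by omega
      subst hk0
      simp
    omega
  have hmem : (k - 1) ∈ {t : ℕ | x < pSum k c (t + 1)} := by
    simp only [Set.mem_setOf_eq]
    have : pSum k c (k - 1 + 1) = pSum k c k := by congr 1; omega
    rw [this, pSum_self]; exact hx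
  have hne : {t : ℕ | x < pSum k c (t + 1)}.Nonempty := ⟨_, hmem⟩
  have hself := Nat.sInf_mem hne
  simp only [Set.mem_setOf_eq] at hself
  have hlt : idxOf k c x < k := by
    have := Nat.sInf_le hmem
    rw [idxOf]; omega
  refine ⟨hlt, ?_, hself⟩
  rcases Nat.eq_zero_or_pos (idxOf k c x) with h0 | h0
  · rw [h0]
    have : pSum k c 0 = 0 := by simp [pSum]
    omega
  · have hnot := Nat.notMem_of_lt_sInf
      (show idxOf k c x - 1 < sInf {t : ℕ | x < pSum k c (t + 1)} by rw [idxOf] at h0 ⊢; omega)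
    simp only [Set.mem_setOf_eq, not_lt] at hnot
    have : idxOf k c x - 1 + 1 = idxOf k c x := by omega
    rwa [this] at hnot

lemma idxOf_mono (c : Fin k → ℕ) {x y : ℕ} (hxy : x ≤ y) (hy : y < ∑ i, c i) :
    idxOf k c x ≤ idxOf k c y := by
  have h := (idxOf_lt c hy).2.2
  exact Nat.sInf_le (by simp only [Set.mem_setOf_eq]; omega)

lemma idxOf_eq_iff (c : Fin k → ℕ) {x : ℕ} (hx : x < ∑ i, c i) (j : Fin k) :
    idxOf k c x = j ↔ pSum k c (j : ℕ) ≤ x ∧ x < pSum k c ((j : ℕ) + 1) := by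
  constructor
  · intro hj
    obtain ⟨_, h2, h3⟩ := idxOf_lt c hx
    rw [hj] at h2 h3
    exact ⟨h2, h3⟩
  · rintro ⟨h1, h2⟩
    have hcj : x - pSum k c (j : ℕ) < c j := by
      have := pSum_succ c j.2
      simp only [Fin.eta] at this
      omega
    have := idxOf_spec c j hcj
    rwa [(by omega : pSum k c (j : ℕ) + (x - pSum k c (j : ℕ)) = x)] at this

lemma card_filter_lt (m b : ℕ) (h : b ≤ m) :
    (univ.filter (fun x : Fin m => (x : ℕ) < b)).card = b := by
  induction b with
  | zero => simp
  | succ b ih =>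
    have hb : b ≤ m := by omega
    have hsplit : (univ.filter (fun x : Fin m => (x : ℕ) < b + 1))
        = insert (⟨b, by omega⟩ : Fin m) (univ.filter (fun x : Fin m => (x : ℕ) < b)) := by
      ext x
      simp only [mem_filter, mem_univ, true_and, mem_insert, Fin.ext_iff]
      omega
    rw [hsplit, Finset.card_insert_of_notMem (by simp), ih hb]

/-- fibers of `idxOf` have the prescribed cardinalities -/
lemma idxOf_fiber_card {m : ℕ} (c : Fin k → ℕ) (hm : m = ∑ i, c i) (j : Fin k) :
    (univ.filter (fun x : Fin m => idxOf k c (x : ℕ) = (j : ℕ))).card = c j := by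
  have hchar : ∀ x : Fin m, idxOf k c (x : ℕ) = (j : ℕ) ↔
      (pSum k c (j : ℕ) ≤ (x : ℕ) ∧ (x : ℕ) < pSum k c ((j : ℕ) + 1)) := by
    intro x
    rw [← idxOf_eq_iff c (by omega : (x:ℕ) < ∑ i, c i) j]
  have hset : (univ.filter (fun x : Fin m => idxOf k c (x : ℕ) = (j : ℕ)))
      = (univ.filter (fun x : Fin m => (x : ℕ) < pSum k c ((j : ℕ) + 1))) \
        (univ.filter (fun x : Fin m => (x : ℕ) < pSum k c (j : ℕ))) := by
    ext x
    simp only [mem_filter, mem_univ, true_and, mem_sdiff, hchar x, not_lt]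
    omega
  have hsub : (univ.filter (fun x : Fin m => (x : ℕ) < pSum k c (j : ℕ)))
      ⊆ (univ.filter (fun x : Fin m => (x : ℕ) < pSum k c ((j : ℕ) + 1))) := by
    intro x hx
    simp only [mem_filter, mem_univ, true_and] at *
    have := pSum_mono c (show (j:ℕ) ≤ (j:ℕ)+1 by omega)
    omega
  rw [hset, Finset.card_sdiff_of_subset hsub,
    card_filter_lt m _ (by rw [hm]; exact pSum_le c _),
    card_filter_lt m _ (by rw [hm]; exact pSum_le c _)]
  have := pSum_succ c j.2
  simp only [Fin.eta] at this
  omega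

/-- canonical form of a "monotone with values `< k`" map out of `Fin m` -/
lemma monotone_eq_idxOf {m : ℕ} (g : Fin m → ℕ) (hlt : ∀ x, g x < k)
    (hmon : ∀ x y : Fin m, x ≤ y → g x ≤ g y) (x : Fin m) :
    g x = idxOf k (fun i : Fin k => (univ.filter (fun z : Fin m => g z = (i : ℕ))).card) (x : ℕ) := by
  set c : Fin k → ℕ := fun i => (univ.filter (fun z : Fin m => g z = (i : ℕ))).card with hc
  -- step 1 : counting fibers below a threshold
  have step1 : ∀ t, t ≤ k → (univ.filter (fun z : Fin m => g z < t)).card = pSum k c t := by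
    intro t
    induction t with
    | zero => intro _; simp [pSum]
    | succ t ih =>
      intro ht
      have ht' : t < k := by omega
      rw [pSum_succ c ht', ← ih (by omega)]
      have hsplit : (univ.filter (fun z : Fin m => g z < t + 1))
          = (univ.filter (fun z : Fin m => g z < t)) ∪ (univ.filter (fun z : Fin m => g z = t)) := by
        ext z
        simp only [mem_filter, mem_univ, true_and, mem_union]
        omega
      rw [hsplit, Finset.card_union_of_disjoint (by
        rw [Finset.disjoint_left]
        intro z hz1 hz2
        simp only [mem_filter, mem_univ, true_and] at hz1 hz2
        omega)]
  -- step 2 : the sub-level sets are initial segments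
  have step2 : ∀ t, t ≤ k → ∀ z : Fin m, (g z < t ↔ (z : ℕ) < pSum k c t) := by
    intro t ht z
    constructor
    · intro hz
      have hsub : (univ.filter (fun w : Fin m => (w : ℕ) < (z : ℕ) + 1))
          ⊆ (univ.filter (fun w : Fin m => g w < t)) := by
        intro w hw
        simp only [mem_filter, mem_univ, true_and] at *
        have : g w ≤ g z := hmon w z (by omega)
        omega
      have := Finset.card_le_card hsub
      rw [step1 t ht, card_filter_lt m ((z:ℕ)+1) (by omega)] at this
      omega
    · intro hz
      by_contra hgz
      push_neg at hgz
      have hsub : (univ.filter (fun w : Fin m => g w < t))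
          ⊆ (univ.filter (fun w : Fin m => (w : ℕ) < (z : ℕ))) := by
        intro w hw
        simp only [mem_filter, mem_univ, true_and] at *
        by_contra hwz
        push_neg at hwz
        have : g z ≤ g w := hmon z w (by omega)
        omega
      have := Finset.card_le_card hsub
      rw [step1 t ht, card_filter_lt m (z:ℕ) (by omega)] at this
      omega
  -- step 3
  have hmem : g x ∈ {i : ℕ | (x : ℕ) < pSum k c (i + 1)} := by
    simp only [Set.mem_setOf_eq]
    exact (step2 (g x + 1) (hlt x) x).1 (by omega)
  rw [idxOf]
  refine (le_antisymm (Nat.sInf_le hmem) ?_).symm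
  refine le_csInf ⟨_, hmem⟩ ?_
  intro b hb
  simp only [Set.mem_setOf_eq] at hb
  by_contra hbx
  push_neg at hbx
  have : g x < b + 1 := (step2 (b + 1) (by have := hlt x; omega) x).2 hb
  omega



open Finset

/-- number of weak compositions : stars and bars -/
lemma nat_card_comps (k m : ℕ) :
    Nat.card {c : Fin k → ℕ // ∑ i, c i = m} = (m + k - 1).choose m := by
  classical
  have e1 : {c : Fin k → ℕ // ∑ i, c i = m}
      ≃ {c : Fin k → ℕ // c ∈ Finset.piAntidiag (univ : Finset (Fin k)) m} :=
    Equiv.subtypeEquivRight (by intro c; simp [Finset.mem_piAntidiag])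
  rw [Nat.card_congr e1, Nat.card_eq_fintype_card, Fintype.card_coe,
    ← Finset.map_sym_eq_piAntidiag, Finset.card_map, Finset.sym_univ]
  rw [show ((univ : Finset (Sym (Fin k) m)).card) = Fintype.card (Sym (Fin k) m) from rfl]
  rw [Sym.card_sym_eq_choose, Fintype.card_fin]
  congr 1
  omega

lemma nat_card_comps_shift (k d m : ℕ) :
    Nat.card {c : Fin k → ℕ // (∑ i, c i) + d = m}
      = if d ≤ m then (m - d + k - 1).choose (m - d) else 0 := by
  split_ifs with h
  · rw [Nat.card_congr (Equiv.subtypeEquivRight (q := fun c => ∑ i, c i = m - d)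
      (by intro c; omega))]
    exact nat_card_comps k (m - d)
  · have : IsEmpty {c : Fin k → ℕ // (∑ i, c i) + d = m} := by
      constructor; rintro ⟨c, hc⟩; omega
    exact Nat.card_of_isEmpty

lemma nat_card_sigma {β : Type*} [Fintype β] (F : β → Type*) [∀ b, Finite (F b)] :
    Nat.card (Σ b, F b) = ∑ b, Nat.card (F b) := by
  classical
  have : ∀ b, Fintype (F b) := fun b => Fintype.ofFinite (F b)
  simp [Nat.card_eq_fintype_card]

/-- matrices with row sums `μ`, columns positive on `A`, zero off `A` -/
def MatOn (p k : ℕ) (μ : Fin p → ℕ) (A : Finset (Fin k)) : Type :=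
  {M : Fin p → Fin k → ℕ //
    (∀ j, ∑ i, M j i = μ j) ∧ (∀ i ∈ A, ∃ j, 0 < M j i) ∧ ∀ i ∉ A, ∀ j, M j i = 0}

lemma matOn_entry_le {p k : ℕ} {μ : Fin p → ℕ} {A : Finset (Fin k)} (M : MatOn p k μ A)
    (j : Fin p) (i : Fin k) : M.1 j i ≤ μ j := by
  rw [← M.2.1 j]
  exact Finset.single_le_sum (f := M.1 j) (fun _ _ => Nat.zero_le _) (mem_univ i)

instance {p k : ℕ} {μ : Fin p → ℕ} {A : Finset (Fin k)} : Finite (MatOn p k μ A) := by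
  apply Finite.of_injective
    (f := fun (M : MatOn p k μ A) (j : Fin p) (i : Fin k) =>
      (⟨M.1 j i, Nat.lt_succ_of_le (matOn_entry_le M j i)⟩ : Fin (μ j + 1)))
  intro M N h
  apply Subtype.ext
  funext j i
  have := congrFun (congrFun h j) i
  simpa [Fin.ext_iff] using this

instance {k m d : ℕ} : Finite {c : Fin k → ℕ // (∑ i, c i) + d = m} := by
  apply Finite.of_injective
    (f := fun (c : {c : Fin k → ℕ // (∑ i, c i) + d = m}) (i : Fin k) =>
      (⟨c.1 i, by
        have : c.1 i ≤ ∑ i, c.1 i :=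
          Finset.single_le_sum (f := c.1) (fun _ _ => Nat.zero_le _) (mem_univ i)
        have := c.2
        omega⟩ : Fin (m + 1)))
  intro c c' h
  apply Subtype.ext
  funext i
  have := congrFun h i
  simpa [Fin.ext_iff] using this


/-- relabelling the columns of a `MatOn` along the order isomorphism with `Fin A.card` -/
def matOnRelabel (p k : ℕ) (μ : Fin p → ℕ) (A : Finset (Fin k)) :
    MatOn p k μ A ≃ MatOn p A.card μ (univ : Finset (Fin A.card)) := by
  classical
  refine
    { toFun := fun M => ⟨fun j i' => M.1 j ((A.orderIsoOfFin rfl i' : {x // x ∈ A}) : Fin k),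
        ?_, ?_, ?_⟩
      invFun := fun N => ⟨fun j i =>
        if h : i ∈ A then N.1 j ((A.orderIsoOfFin rfl).symm ⟨i, h⟩) else 0, ?_, ?_, ?_⟩
      left_inv := ?_
      right_inv := ?_ }
  · -- rows of relabelled
    intro j
    show ∑ i' : Fin A.card, M.1 j ((A.orderIsoOfFin rfl i' : {x // x ∈ A}) : Fin k) = μ j
    have h1 : ∑ i' : Fin A.card, M.1 j ((A.orderIsoOfFin rfl i' : {x // x ∈ A}) : Fin k)
        = ∑ a : {x // x ∈ A}, M.1 j a :=
      Fintype.sum_equiv (A.orderIsoOfFin rfl).toEquiv _ _ (fun i' => rfl)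
    have hz : ∑ i ∈ Aᶜ, M.1 j i = 0 :=
      Finset.sum_eq_zero (fun i hi => M.2.2.2 i (by simpa using hi) j)
    rw [h1, Finset.sum_coe_sort A (fun i => M.1 j i), ← M.2.1 j,
      ← Finset.sum_add_sum_compl A (M.1 j), hz, add_zero]
  · -- columns positive
    intro i' _
    exact M.2.2.1 _ (((A.orderIsoOfFin rfl) i').2)
  · -- support
    intro i' hi'
    exact absurd (mem_univ i') hi'
  · -- rows of unrelabelled
    intro j
    rw [← Finset.sum_add_sum_compl A
      (fun i => if h : i ∈ A then N.1 j ((A.orderIsoOfFin rfl).symm ⟨i, h⟩) else 0)]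
    have hz : ∑ i ∈ Aᶜ, (if h : i ∈ A then N.1 j ((A.orderIsoOfFin rfl).symm ⟨i, h⟩) else 0)
        = 0 :=
      Finset.sum_eq_zero (fun i hi => dif_neg (by simpa using hi))
    rw [hz, add_zero]
    rw [← Finset.sum_coe_sort A
      (fun i => if h : i ∈ A then N.1 j ((A.orderIsoOfFin rfl).symm ⟨i, h⟩) else 0)]
    have h2 : ∑ a : {x // x ∈ A},
        (if h : (a : Fin k) ∈ A then N.1 j ((A.orderIsoOfFin rfl).symm ⟨(a : Fin k), h⟩) else 0)
        = ∑ i', N.1 j i' :=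
      Fintype.sum_equiv (A.orderIsoOfFin rfl).toEquiv.symm _ _
        (fun a : {x // x ∈ A} => by
          rw [dif_pos a.2]
          exact congrArg (N.1 j) (congrArg _ (Subtype.ext rfl)))
    rw [h2]
    exact N.2.1 j
  · -- columns positive
    intro i hi
    obtain ⟨j, hj⟩ := N.2.2.1 ((A.orderIsoOfFin rfl).symm ⟨i, hi⟩) (mem_univ _)
    refine ⟨j, ?_⟩
    show 0 < if h : i ∈ A then N.1 j ((A.orderIsoOfFin rfl).symm ⟨i, h⟩) else 0
    rw [dif_pos hi]
    exact hj
  · -- support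
    intro i hi j
    show (if h : i ∈ A then N.1 j ((A.orderIsoOfFin rfl).symm ⟨i, h⟩) else 0) = 0
    rw [dif_neg hi]
  · -- left inverse
    intro M
    apply Subtype.ext
    funext j i
    show (if h : i ∈ A then
        M.1 j ((A.orderIsoOfFin rfl ((A.orderIsoOfFin rfl).symm ⟨i, h⟩) : {x // x ∈ A}) : Fin k)
      else 0) = M.1 j i
    by_cases h : i ∈ A
    · rw [dif_pos h]
      congr 1
      rw [(A.orderIsoOfFin rfl).apply_symm_apply]
    · rw [dif_neg h]
      exact (M.2.2.2 i h j).symm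
  · -- right inverse
    intro N
    apply Subtype.ext
    funext j i'
    show (if h : ((A.orderIsoOfFin rfl i' : {x // x ∈ A}) : Fin k) ∈ A then
        N.1 j ((A.orderIsoOfFin rfl).symm ⟨((A.orderIsoOfFin rfl i' : {x // x ∈ A}) : Fin k), h⟩)
      else 0) = N.1 j i'
    rw [dif_pos (A.orderIsoOfFin rfl i').2]
    congr 1
    rw [show (⟨((A.orderIsoOfFin rfl i' : {x // x ∈ A}) : Fin k), (A.orderIsoOfFin rfl i').2⟩
        : {x // x ∈ A}) = A.orderIsoOfFin rfl i' from Subtype.ext rfl]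
    exact congrArg (N.1 j) ((A.orderIsoOfFin rfl).symm_apply_apply i')

lemma nat_card_matOn_eq (p k : ℕ) (μ : Fin p → ℕ) (A : Finset (Fin k)) :
    Nat.card (MatOn p k μ A) = Nat.card (MatOn p A.card μ (univ : Finset (Fin A.card))) :=
  Nat.card_congr (matOnRelabel p k μ A)

section Step
variable {p k : ℕ} (μ : Fin (p + 1) → ℕ)

/-- the set of columns untouched by the first `p` rows -/
def newCols (M : MatOn (p + 1) k μ (univ : Finset (Fin k))) : Finset (Fin k) :=
  univ.filter (fun i => ∀ j : Fin p, M.1 j.castSucc i = 0)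

lemma last_pos_on_newCols (M : MatOn (p + 1) k μ (univ : Finset (Fin k)))
    {i : Fin k} (hi : i ∈ newCols μ M) : 0 < M.1 (Fin.last p) i := by
  obtain ⟨j, hj⟩ := M.2.2.1 i (mem_univ i)
  simp only [newCols, mem_filter, mem_univ, true_and] at hi
  rcases Fin.lastCases (motive := fun j => 0 < M.1 j i → 0 < M.1 (Fin.last p) i)
    (fun h => h) (fun j' h => by rw [hi j'] at h; omega) j hj with h
  exact h

/-- data for the peeling step -/
def StepData (p k : ℕ) (μ : Fin (p + 1) → ℕ) : Type :=
  Σ B : Finset (Fin k),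
    MatOn p k (Fin.init μ) Bᶜ ×
      {c : Fin k → ℕ // (∑ i, c i) + B.card = μ (Fin.last p)}

instance : Finite (StepData p k μ) := by
  unfold StepData; infer_instance

/-- reconstruct a matrix from the peeling data -/
def matStepInv (T : StepData p k μ) : MatOn (p + 1) k μ (univ : Finset (Fin k)) := by
  classical
  refine ⟨fun j => Fin.lastCases (motive := fun _ => Fin k → ℕ)
      (fun i => T.2.2.1 i + (if i ∈ T.1 then 1 else 0))
      (fun j' => T.2.1.1 j') j, ?_, ?_, ?_⟩
  · intro j
    refine Fin.lastCases ?_ ?_ j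
    · simp only [Fin.lastCases_last]
      have hcard : ∑ i, (if i ∈ T.1 then 1 else 0) = T.1.card := by
        rw [← Finset.sum_filter, Finset.filter_mem_eq_inter, Finset.univ_inter,
          Finset.card_eq_sum_ones]
      rw [Finset.sum_add_distrib, hcard]
      exact T.2.2.2
    · intro j'
      simp only [Fin.lastCases_castSucc]
      exact T.2.1.2.1 j'
  · intro i _
    by_cases h : i ∈ T.1
    · exact ⟨Fin.last p, by simp [Fin.lastCases_last, h]⟩
    · obtain ⟨j', hj'⟩ := T.2.1.2.2.1 i (by simpa using h)
      exact ⟨j'.castSucc, by simpa [Fin.lastCases_castSucc] using hj'⟩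
  · intro i hi
    exact absurd (mem_univ i) hi

lemma matStepInv_castSucc (T : StepData p k μ) (j' : Fin p) (i : Fin k) :
    (matStepInv μ T).1 j'.castSucc i = T.2.1.1 j' i := by
  show (Fin.lastCases (motive := fun _ => Fin k → ℕ) _ _ j'.castSucc) i = _
  rw [Fin.lastCases_castSucc]

lemma matStepInv_last (T : StepData p k μ) (i : Fin k) :
    (matStepInv μ T).1 (Fin.last p) i = T.2.2.1 i + (if i ∈ T.1 then 1 else 0) := by
  show (Fin.lastCases (motive := fun _ => Fin k → ℕ) _ _ (Fin.last p)) i = _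
  rw [Fin.lastCases_last]

lemma newCols_matStepInv (T : StepData p k μ) : newCols μ (matStepInv μ T) = T.1 := by
  classical
  ext i
  simp only [newCols, mem_filter, mem_univ, true_and]
  constructor
  · intro h
    by_contra hiB
    obtain ⟨j', hj'⟩ := T.2.1.2.2.1 i (by simpa using hiB)
    rw [show T.2.1.1 j' i = (matStepInv μ T).1 j'.castSucc i from
      (matStepInv_castSucc μ T j' i).symm, h j'] at hj'
    omega
  · intro hiB j'
    rw [matStepInv_castSucc μ T j' i]
    exact T.2.1.2.2.2 i (by simpa using hiB) j'

lemma matStepInv_injective : Function.Injective (matStepInv μ (p := p) (k := k)) := by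
  classical
  rintro ⟨B, N, c⟩ ⟨B', N', c'⟩ h
  have hB : B = B' := by
    have h2 := congrArg (newCols μ) h
    erw [newCols_matStepInv, newCols_matStepInv] at h2
    exact h2
  subst hB
  have hN : N = N' := by
    apply Subtype.ext
    funext j' i
    have h1 : (matStepInv μ ⟨B, N, c⟩).1 j'.castSucc i = N.1 j' i :=
      matStepInv_castSucc μ ⟨B, N, c⟩ j' i
    have h2 : (matStepInv μ ⟨B, N', c'⟩).1 j'.castSucc i = N'.1 j' i :=
      matStepInv_castSucc μ ⟨B, N', c'⟩ j' i
    rw [h] at h1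
    rw [h1] at h2
    exact h2
  have hc : c = c' := by
    apply Subtype.ext
    funext i
    have h1 : (matStepInv μ ⟨B, N, c⟩).1 (Fin.last p) i = c.1 i + (if i ∈ B then 1 else 0) :=
      matStepInv_last μ ⟨B, N, c⟩ i
    have h2 : (matStepInv μ ⟨B, N', c'⟩).1 (Fin.last p) i = c'.1 i + (if i ∈ B then 1 else 0) :=
      matStepInv_last μ ⟨B, N', c'⟩ i
    rw [h] at h1
    rw [h1] at h2
    omega
  rw [hN, hc]

lemma matStepInv_surjective : Function.Surjective (matStepInv μ (p := p) (k := k)) := by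
  classical
  intro M
  have hsumc : (∑ i, (M.1 (Fin.last p) i - (if i ∈ newCols μ M then 1 else 0)))
      + (newCols μ M).card = μ (Fin.last p) := by
    have hpt : ∀ i, (M.1 (Fin.last p) i - (if i ∈ newCols μ M then 1 else 0))
        + (if i ∈ newCols μ M then 1 else 0) = M.1 (Fin.last p) i := by
      intro i
      by_cases h : i ∈ newCols μ M
      · have := last_pos_on_newCols μ M h
        simp only [if_pos h]
        omega
      · simp [h]
    have hcard : ∑ i, (if i ∈ newCols μ M then 1 else 0) = (newCols μ M).card := by
      rw [← Finset.sum_filter, Finset.filter_mem_eq_inter, Finset.univ_inter,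
        Finset.card_eq_sum_ones]
    rw [← hcard, ← Finset.sum_add_distrib, Finset.sum_congr rfl (fun i _ => hpt i)]
    exact M.2.1 (Fin.last p)
  refine ⟨⟨newCols μ M,
    ⟨fun j i => M.1 j.castSucc i, fun j => M.2.1 j.castSucc, ?_, ?_⟩,
    ⟨fun i => M.1 (Fin.last p) i - (if i ∈ newCols μ M then 1 else 0), hsumc⟩⟩, ?_⟩
  · intro i hi
    simp only [newCols, mem_compl, mem_filter, mem_univ, true_and, not_forall] at hi
    obtain ⟨j, hj⟩ := hi
    refine ⟨j, ?_⟩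
    show 0 < M.1 j.castSucc i
    omega
  · intro i hi j
    simp only [newCols, mem_compl, mem_filter, mem_univ, true_and, not_not] at hi
    exact hi j
  · apply Subtype.ext
    funext j i
    refine Fin.lastCases ?_ ?_ j
    · erw [matStepInv_last]
      show M.1 (Fin.last p) i - (if i ∈ newCols μ M then 1 else 0)
          + (if i ∈ newCols μ M then 1 else 0) = M.1 (Fin.last p) i
      by_cases h : i ∈ newCols μ M
      · have := last_pos_on_newCols μ M h
        simp only [if_pos h]
        omega
      · simp [h]
    · intro j'
      erw [matStepInv_castSucc]

lemma nat_card_step :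
    Nat.card (MatOn (p + 1) k μ (univ : Finset (Fin k)))
      = Nat.card (StepData p k μ) :=
  (Nat.card_eq_of_bijective (matStepInv μ)
    ⟨matStepInv_injective μ, matStepInv_surjective μ⟩).symm

end Step

lemma sum_finset_card {k : ℕ} (φ : ℕ → ℕ) :
    ∑ B : Finset (Fin k), φ B.card = ∑ d ∈ Finset.range (k + 1), k.choose d * φ d := by
  classical
  rw [show (∑ B : Finset (Fin k), φ B.card) = ∑ B ∈ (univ : Finset (Fin k)).powerset, φ B.card
    from by rw [Finset.powerset_univ]]
  rw [Finset.sum_powerset]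
  rw [Finset.card_univ, Fintype.card_fin]
  apply Finset.sum_congr rfl
  intro d _
  rw [Finset.sum_congr rfl (fun B hB => by
    rw [(Finset.mem_powersetCard.1 hB).2])]
  rw [Finset.sum_const, smul_eq_mul, Finset.card_powersetCard, Finset.card_univ,
    Fintype.card_fin, mul_comm]

lemma nat_card_stepData (p k : ℕ) (μ : Fin (p + 1) → ℕ) :
    Nat.card (StepData p k μ)
      = ∑ d ∈ Finset.range (k + 1), k.choose d *
          (Nat.card (MatOn p (k - d) (Fin.init μ) (univ : Finset (Fin (k - d)))) *
            (if d ≤ μ (Fin.last p) then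
              (μ (Fin.last p) - d + k - 1).choose (μ (Fin.last p) - d) else 0)) := by
  classical
  rw [show Nat.card (StepData p k μ) = Nat.card (Σ B : Finset (Fin k),
      MatOn p k (Fin.init μ) Bᶜ ×
        {c : Fin k → ℕ // (∑ i, c i) + B.card = μ (Fin.last p)}) from rfl]
  rw [nat_card_sigma]
  have hB : ∀ B : Finset (Fin k),
      Nat.card (MatOn p k (Fin.init μ) Bᶜ ×
        {c : Fin k → ℕ // (∑ i, c i) + B.card = μ (Fin.last p)})
      = Nat.card (MatOn p (k - B.card) (Fin.init μ) (univ : Finset (Fin (k - B.card)))) *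
          (if B.card ≤ μ (Fin.last p) then
            (μ (Fin.last p) - B.card + k - 1).choose (μ (Fin.last p) - B.card) else 0) := by
    intro B
    rw [Nat.card_prod, nat_card_matOn_eq, nat_card_comps_shift]
    have hc : Bᶜ.card = k - B.card := by
      rw [Finset.card_compl, Fintype.card_fin]
    rw [hc]
  rw [Finset.sum_congr rfl (fun B _ => hB B)]
  exact sum_finset_card (fun d =>
    Nat.card (MatOn p (k - d) (Fin.init μ) (univ : Finset (Fin (k - d)))) *
      (if d ≤ μ (Fin.last p) then
        (μ (Fin.last p) - d + k - 1).choose (μ (Fin.last p) - d) else 0))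

section CastSuccSums
variable {p : ℕ}

lemma filter_le_castSucc_map (j' : Fin p) :
    (univ.filter (fun l : Fin (p + 1) => l ≤ j'.castSucc))
      = (univ.filter (fun l' : Fin p => l' ≤ j')).map Fin.castSuccEmb := by
  ext l
  simp only [Finset.mem_filter, Finset.mem_univ, true_and, Finset.mem_map]
  constructor
  · intro hl
    have hne : l ≠ Fin.last p := by
      intro h
      rw [h] at hl
      exact absurd (lt_of_le_of_lt hl (Fin.castSucc_lt_last j')) (lt_irrefl _)
    refine ⟨l.castPred hne, ?_, Fin.castSucc_castPred l hne⟩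
    rw [← Fin.castSucc_le_castSucc_iff, Fin.castSucc_castPred]
    exact hl
  · rintro ⟨l', hl', rfl⟩
    exact Fin.castSucc_le_castSucc_iff.2 hl'

lemma filter_lt_castSucc_map (j' : Fin p) :
    (univ.filter (fun l : Fin (p + 1) => l < j'.castSucc))
      = (univ.filter (fun l' : Fin p => l' < j')).map Fin.castSuccEmb := by
  ext l
  simp only [Finset.mem_filter, Finset.mem_univ, true_and, Finset.mem_map]
  constructor
  · intro hl
    have hne : l ≠ Fin.last p := by
      intro h
      rw [h] at hl
      exact absurd (lt_trans hl (Fin.castSucc_lt_last j')) (lt_irrefl _)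
    refine ⟨l.castPred hne, ?_, Fin.castSucc_castPred l hne⟩
    rw [← Fin.castSucc_lt_castSucc_iff, Fin.castSucc_castPred]
    exact hl
  · rintro ⟨l', hl', rfl⟩
    exact Fin.castSucc_lt_castSucc_iff.2 hl'

lemma filter_le_last_eq :
    (univ.filter (fun l : Fin (p + 1) => l ≤ Fin.last p)) = univ := by
  ext l
  simp [Fin.le_last]

lemma filter_lt_last_map :
    (univ.filter (fun l : Fin (p + 1) => l < Fin.last p))
      = (univ : Finset (Fin p)).map Fin.castSuccEmb := by
  ext l
  simp only [Finset.mem_filter, Finset.mem_univ, true_and, Finset.mem_map]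
  constructor
  · intro hl
    have hne : l ≠ Fin.last p := Fin.ne_last_of_lt hl
    exact ⟨l.castPred hne, Fin.castSucc_castPred l hne⟩
  · rintro ⟨l', rfl⟩
    exact Fin.castSucc_lt_last l'

end CastSuccSums

/-- splitting a `(p+1)`-tuple of bounded values into the first `p` and the last one -/
def snocEquiv (p : ℕ) (μ : Fin (p + 1) → ℕ) :
    ((∀ j' : Fin p, Fin (Fin.init μ j' + 1)) × Fin (μ (Fin.last p) + 1))
      ≃ (∀ j : Fin (p + 1), Fin (μ j + 1)) where
  toFun := fun T j => Fin.lastCases (motive := fun j => Fin (μ j + 1)) T.2 (fun j' => T.1 j') j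
  invFun := fun γ => (fun j' => γ j'.castSucc, γ (Fin.last p))
  left_inv := by
    intro T
    refine Prod.ext ?_ ?_
    · funext j'
      exact Fin.lastCases_castSucc (motive := fun j => Fin (μ j + 1)) _
    · exact Fin.lastCases_last (motive := fun j => Fin (μ j + 1))
  right_inv := by
    intro γ
    funext j
    refine Fin.lastCases ?_ ?_ j
    · simp only [Fin.lastCases_last]
    · intro j'
      simp only [Fin.lastCases_castSucc]

lemma key_exchange (k s q m : ℕ) :
    ∑ d ∈ Finset.range (k + 1), k.choose d *
        ((if s = k - d then q else 0) *
          (if d ≤ m then (m - d + k - 1).choose (m - d) else 0))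
      = ∑ a : Fin (m + 1),
          (if s + (m - (a : ℕ)) = k then
            q * ((s + (m - (a : ℕ))).choose (m - (a : ℕ)) * (s + m - 1).choose (a : ℕ))
          else 0) := by
  by_cases h1 : s ≤ k ∧ k - s ≤ m
  · obtain ⟨hsk, hksm⟩ := h1
    rw [Finset.sum_eq_single (k - s)]
    rotate_left
    · intro d hd hne
      simp only [Finset.mem_range] at hd
      by_cases hsd : s = k - d
      · exact absurd (by omega) hne
      · rw [if_neg hsd]
        simp
    · intro h
      exact absurd (Finset.mem_range.2 (by omega)) h
    rw [Finset.sum_eq_single (⟨m - (k - s), by omega⟩ : Fin (m + 1))]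
    rotate_left
    · intro a _ hne
      by_cases ha : s + (m - (a : ℕ)) = k
      · exfalso
        apply hne
        have h2 := a.isLt
        apply Fin.ext
        show (a : ℕ) = m - (k - s)
        omega
      · rw [if_neg ha]
    · intro h
      exact absurd (Finset.mem_univ _) h
    rw [if_pos (by omega : s = k - (k - s))]
    rw [if_pos (by omega : k - s ≤ m)]
    rw [show ((⟨m - (k - s), by omega⟩ : Fin (m + 1)) : ℕ) = m - (k - s) from rfl]
    rw [show m - (m - (k - s)) = k - s from by omega]
    rw [if_pos (by omega : s + (k - s) = k)]
    rw [show m - (k - s) + k - 1 = s + m - 1 from by omega]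
    rw [show s + (k - s) = k from by omega]
    ring
  · rw [Finset.sum_eq_zero, Finset.sum_eq_zero]
    · intro a _
      rw [if_neg (by
        have h2 := a.isLt
        omega)]
    · intro d hd
      simp only [Finset.mem_range] at hd
      by_cases hsd : s = k - d
      · rw [if_pos hsd, if_neg (by omega)]
        simp
      · rw [if_neg hsd]
        simp

section FSnoc
variable {p k : ℕ} (μ : Fin (p + 1) → ℕ)
  (γ' : ∀ j' : Fin p, Fin (Fin.init μ j' + 1)) (a : Fin (μ (Fin.last p) + 1))

lemma snoc_castSucc (j' : Fin p) :
    ((snocEquiv p μ (γ', a)) j'.castSucc : ℕ) = (γ' j' : ℕ) := by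
  show ((Fin.lastCases (motive := fun j => Fin (μ j + 1)) a (fun j' => γ' j') j'.castSucc) : ℕ) = _
  erw [Fin.lastCases_castSucc]

lemma snoc_last : ((snocEquiv p μ (γ', a)) (Fin.last p) : ℕ) = (a : ℕ) := by
  show ((Fin.lastCases (motive := fun j => Fin (μ j + 1)) a (fun j' => γ' j') (Fin.last p)) : ℕ) = _
  erw [Fin.lastCases_last]

lemma F_snoc :
    (if (∑ j, (μ j - ((snocEquiv p μ (γ', a)) j : ℕ))) = k then
        ∏ j, ((∑ l ∈ univ.filter (fun l => l ≤ j), (μ l - ((snocEquiv p μ (γ', a)) l : ℕ))).choose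
            (μ j - ((snocEquiv p μ (γ', a)) j : ℕ)) *
          ((∑ l ∈ univ.filter (fun l => l < j), (μ l - ((snocEquiv p μ (γ', a)) l : ℕ)))
              + μ j - 1).choose ((snocEquiv p μ (γ', a)) j : ℕ))
      else 0)
    = (if (∑ j', (Fin.init μ j' - (γ' j' : ℕ))) + (μ (Fin.last p) - (a : ℕ)) = k then
        (∏ j', ((∑ l' ∈ univ.filter (fun l' => l' ≤ j'), (Fin.init μ l' - (γ' l' : ℕ))).choose
              (Fin.init μ j' - (γ' j' : ℕ)) *
            ((∑ l' ∈ univ.filter (fun l' => l' < j'), (Fin.init μ l' - (γ' l' : ℕ)))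
                + Fin.init μ j' - 1).choose (γ' j' : ℕ)))
          * (((∑ j', (Fin.init μ j' - (γ' j' : ℕ))) + (μ (Fin.last p) - (a : ℕ))).choose
                (μ (Fin.last p) - (a : ℕ))
              * ((∑ j', (Fin.init μ j' - (γ' j' : ℕ))) + μ (Fin.last p) - 1).choose (a : ℕ))
      else 0) := by
  set γ := snocEquiv p μ (γ', a) with hγ
  have hcs : ∀ j' : Fin p, (γ j'.castSucc : ℕ) = (γ' j' : ℕ) := snoc_castSucc μ γ' a
  have hl : (γ (Fin.last p) : ℕ) = (a : ℕ) := snoc_last μ γ' a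
  have hS : (∑ j, (μ j - (γ j : ℕ)))
      = (∑ j', (Fin.init μ j' - (γ' j' : ℕ))) + (μ (Fin.last p) - (a : ℕ)) := by
    rw [Fin.sum_univ_castSucc (f := fun j => μ j - (γ j : ℕ)), hl]
    congr 1
    exact Finset.sum_congr rfl (fun j' _ => by rw [hcs j']; rfl)
  have hle : ∀ j' : Fin p,
      (∑ l ∈ univ.filter (fun l => l ≤ j'.castSucc), (μ l - (γ l : ℕ)))
        = ∑ l' ∈ univ.filter (fun l' => l' ≤ j'), (Fin.init μ l' - (γ' l' : ℕ)) := by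
    intro j'
    rw [filter_le_castSucc_map j', Finset.sum_map]
    exact Finset.sum_congr rfl (fun l' _ => by rw [show ((Fin.castSuccEmb : Fin p ↪ Fin (p+1)) l') = l'.castSucc from rfl, hcs l']; rfl)
  have hlt : ∀ j' : Fin p,
      (∑ l ∈ univ.filter (fun l => l < j'.castSucc), (μ l - (γ l : ℕ)))
        = ∑ l' ∈ univ.filter (fun l' => l' < j'), (Fin.init μ l' - (γ' l' : ℕ)) := by
    intro j'
    rw [filter_lt_castSucc_map j', Finset.sum_map]
    exact Finset.sum_congr rfl (fun l' _ => by rw [show ((Fin.castSuccEmb : Fin p ↪ Fin (p+1)) l') = l'.castSucc from rfl, hcs l']; rfl)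
  have hleL : (∑ l ∈ univ.filter (fun l => l ≤ Fin.last p), (μ l - (γ l : ℕ)))
      = (∑ j', (Fin.init μ j' - (γ' j' : ℕ))) + (μ (Fin.last p) - (a : ℕ)) := by
    rw [filter_le_last_eq, hS]
  have hltL : (∑ l ∈ univ.filter (fun l => l < Fin.last p), (μ l - (γ l : ℕ)))
      = ∑ j', (Fin.init μ j' - (γ' j' : ℕ)) := by
    rw [filter_lt_last_map, Finset.sum_map]
    exact Finset.sum_congr rfl (fun l' _ => by rw [show ((Fin.castSuccEmb : Fin p ↪ Fin (p+1)) l') = l'.castSucc from rfl, hcs l']; rfl)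
  rw [hS]
  by_cases hk : (∑ j', (Fin.init μ j' - (γ' j' : ℕ))) + (μ (Fin.last p) - (a : ℕ)) = k
  · rw [if_pos hk, if_pos hk]
    rw [Fin.prod_univ_castSucc (f := fun j =>
      (∑ l ∈ univ.filter (fun l => l ≤ j), (μ l - (γ l : ℕ))).choose (μ j - (γ j : ℕ)) *
        ((∑ l ∈ univ.filter (fun l => l < j), (μ l - (γ l : ℕ))) + μ j - 1).choose (γ j : ℕ))]
    congr 1
    · apply Finset.prod_congr rfl
      intro j' _
      rw [hle j', hlt j', hcs j']
      rfl
    · rw [hleL, hltL, hl]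
  · rw [if_neg hk, if_neg hk]

end FSnoc

theorem matOn_card (p : ℕ) : ∀ (μ : Fin p → ℕ), (∀ j, 0 < μ j) → ∀ (k : ℕ),
    Nat.card (MatOn p k μ (univ : Finset (Fin k)))
      = ∑ γ : (∀ j : Fin p, Fin (μ j + 1)),
          if (∑ j, (μ j - (γ j : ℕ))) = k then
            ∏ j, ((∑ l ∈ univ.filter (fun l => l ≤ j), (μ l - (γ l : ℕ))).choose
                (μ j - (γ j : ℕ)) *
              ((∑ l ∈ univ.filter (fun l => l < j), (μ l - (γ l : ℕ))) + μ j - 1).choose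
                (γ j : ℕ))
          else 0 := by
  induction p with
  | zero =>
    intro μ _ k
    have huniq : ∀ γ : (∀ j : Fin 0, Fin (μ j + 1)), True := fun _ => trivial
    rw [Fintype.sum_eq_single (fun j : Fin 0 => j.elim0)
      (fun γ hγ => absurd (funext (fun j => j.elim0)) hγ)]
    simp only [Finset.univ_eq_empty, Finset.sum_empty, Finset.prod_empty]
    cases k with
    | zero =>
      haveI : Unique (MatOn 0 0 μ (univ : Finset (Fin 0))) :=
        { default := ⟨fun j => j.elim0, fun j => j.elim0, fun i _ => i.elim0,
            fun i _ _ => i.elim0⟩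
          uniq := fun M => Subtype.ext (funext (fun j => j.elim0)) }
      rw [Nat.card_unique, if_pos rfl]
    | succ k' =>
      haveI : IsEmpty (MatOn 0 (k' + 1) μ (univ : Finset (Fin (k' + 1)))) := by
        constructor
        intro M
        obtain ⟨j, _⟩ := M.2.2.1 ⟨0, by omega⟩ (mem_univ _)
        exact j.elim0
      rw [Nat.card_of_isEmpty, if_neg (by omega)]
  | succ p ih =>
    intro μ hpos k
    rw [nat_card_step, nat_card_stepData]
    have hpos' : ∀ j', 0 < Fin.init μ j' := fun j' => hpos _
    rw [Finset.sum_congr rfl (fun d _ => by rw [ih (Fin.init μ) hpos' (k - d)])]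
    rw [← Equiv.sum_comp (snocEquiv p μ) (fun γ => if (∑ j, (μ j - (γ j : ℕ))) = k then
        ∏ j, ((∑ l ∈ univ.filter (fun l => l ≤ j), (μ l - (γ l : ℕ))).choose
            (μ j - (γ j : ℕ)) *
          ((∑ l ∈ univ.filter (fun l => l < j), (μ l - (γ l : ℕ))) + μ j - 1).choose
            (γ j : ℕ))
        else 0)]
    rw [Fintype.sum_prod_type]
    rw [Finset.sum_congr rfl (fun γ' _ => Finset.sum_congr rfl
      (fun a _ => F_snoc (k := k) μ γ' a))]
    -- now pure sum manipulation
    have lhs_expand : ∀ d : ℕ,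
        (k.choose d * ((∑ γ' : (∀ j' : Fin p, Fin (Fin.init μ j' + 1)),
            if (∑ j', (Fin.init μ j' - (γ' j' : ℕ))) = k - d then
              ∏ j', ((∑ l' ∈ univ.filter (fun l' => l' ≤ j'),
                  (Fin.init μ l' - (γ' l' : ℕ))).choose (Fin.init μ j' - (γ' j' : ℕ)) *
                ((∑ l' ∈ univ.filter (fun l' => l' < j'), (Fin.init μ l' - (γ' l' : ℕ)))
                    + Fin.init μ j' - 1).choose (γ' j' : ℕ))
            else 0) *
          (if d ≤ μ (Fin.last p) then
            (μ (Fin.last p) - d + k - 1).choose (μ (Fin.last p) - d) else 0)))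
        = ∑ γ' : (∀ j' : Fin p, Fin (Fin.init μ j' + 1)),
            k.choose d * ((if (∑ j', (Fin.init μ j' - (γ' j' : ℕ))) = k - d then
              ∏ j', ((∑ l' ∈ univ.filter (fun l' => l' ≤ j'),
                  (Fin.init μ l' - (γ' l' : ℕ))).choose (Fin.init μ j' - (γ' j' : ℕ)) *
                ((∑ l' ∈ univ.filter (fun l' => l' < j'), (Fin.init μ l' - (γ' l' : ℕ)))
                    + Fin.init μ j' - 1).choose (γ' j' : ℕ))
            else 0) *
          (if d ≤ μ (Fin.last p) then
            (μ (Fin.last p) - d + k - 1).choose (μ (Fin.last p) - d) else 0)) := by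
      intro d
      rw [Finset.sum_mul, Finset.mul_sum]
    rw [Finset.sum_congr rfl (fun d _ => lhs_expand d)]
    rw [Finset.sum_comm]
    apply Finset.sum_congr rfl
    intro γ' _
    exact key_exchange k (∑ j', (Fin.init μ j' - (γ' j' : ℕ)))
      (∏ j', ((∑ l' ∈ univ.filter (fun l' => l' ≤ j'),
          (Fin.init μ l' - (γ' l' : ℕ))).choose (Fin.init μ j' - (γ' j' : ℕ)) *
        ((∑ l' ∈ univ.filter (fun l' => l' < j'), (Fin.init μ l' - (γ' l' : ℕ)))
            + Fin.init μ j' - 1).choose (γ' j' : ℕ)))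
      (μ (Fin.last p))

section Batches
variable {p n k : ℕ} {μ : Fin p → ℕ} (hsum : ∑ j, μ j = n)

/-- embedding of the `j`-th batch into `Fin n` -/
def embV (j : Fin p) (x : Fin (μ j)) : Fin n :=
  ⟨pSum p μ (j : ℕ) + (x : ℕ), by
    have h1 := pSum_succ μ j.2
    simp only [Fin.eta] at h1
    have h2 : pSum p μ ((j : ℕ) + 1) ≤ ∑ i, μ i := pSum_le μ _
    omega⟩

lemma idxOf_embV (j : Fin p) (x : Fin (μ j)) :
    idxOf p μ ((embV hsum j x : Fin n) : ℕ) = (j : ℕ) :=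
  idxOf_spec μ j x.2

/-- the batch index of a position -/
noncomputable def bIdx (y : Fin n) : Fin p :=
  ⟨idxOf p μ (y : ℕ), (idxOf_lt μ (show (y : ℕ) < ∑ i, μ i by rw [hsum]; exact y.2)).1⟩

/-- the offset of a position inside its batch -/
noncomputable def bOff (y : Fin n) : ℕ := (y : ℕ) - pSum p μ (idxOf p μ (y : ℕ))

lemma bOff_lt (y : Fin n) : bOff (μ := μ) y < μ (bIdx hsum y) := by
  have hy : (y : ℕ) < ∑ i, μ i := by rw [hsum]; exact y.2
  obtain ⟨h1, h2, h3⟩ := idxOf_lt μ hy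
  have h4 := pSum_succ μ (show idxOf p μ (y : ℕ) < p from h1)
  rw [bOff]
  show (y : ℕ) - pSum p μ (idxOf p μ (y : ℕ)) < μ ⟨idxOf p μ (y : ℕ), _⟩
  omega

lemma embV_bIdx (y : Fin n) :
    embV hsum (bIdx hsum y) ⟨bOff (μ := μ) y, bOff_lt hsum y⟩ = y := by
  apply Fin.ext
  show pSum p μ (idxOf p μ (y : ℕ)) + ((y : ℕ) - pSum p μ (idxOf p μ (y : ℕ))) = (y : ℕ)
  have hy : (y : ℕ) < ∑ i, μ i := by rw [hsum]; exact y.2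
  obtain ⟨h1, h2, h3⟩ := idxOf_lt μ hy
  omega

lemma bIdx_embV (j : Fin p) (x : Fin (μ j)) : bIdx hsum (embV hsum j x) = j :=
  Fin.ext (idxOf_embV hsum j x)

lemma bOff_embV (j : Fin p) (x : Fin (μ j)) :
    bOff (μ := μ) (embV hsum j x) = (x : ℕ) := by
  rw [bOff, idxOf_embV hsum j x]
  show pSum p μ (j : ℕ) + (x : ℕ) - pSum p μ (j : ℕ) = (x : ℕ)
  omega

/-- functions `Fin n → ℕ` that are `< k`, surjective onto `[0,k)`, and weakly
increasing on each batch -/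
def FibT (p n k : ℕ) (μ : Fin p → ℕ) : Type :=
  {f : Fin n → ℕ // (∀ x, f x < k) ∧ (∀ i, i < k → ∃ x, f x = i) ∧
    (∀ a b : Fin n, batchOf p μ (a : ℕ) = batchOf p μ (b : ℕ) → (a : ℕ) < (b : ℕ) → f a ≤ f b)}

/-- the fiber-counting matrix of an `f : FibT` -/
def fibToMat (f : FibT p n k μ) : MatOn p k μ (univ : Finset (Fin k)) := by
  classical
  refine ⟨fun j i => (univ.filter (fun x : Fin (μ j) => f.1 (embV hsum j x) = (i : ℕ))).card,
    ?_, ?_, ?_⟩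
  · intro j
    show ∑ i : Fin k,
      (univ.filter (fun x : Fin (μ j) => f.1 (embV hsum j x) = (i : ℕ))).card = μ j
    have h := Finset.card_eq_sum_card_fiberwise
      (f := fun x : Fin (μ j) => (⟨f.1 (embV hsum j x), f.2.1 _⟩ : Fin k))
      (s := univ) (t := univ) (fun x _ => mem_univ _)
    rw [Finset.card_univ, Fintype.card_fin] at h
    conv_rhs => rw [h]
    apply Finset.sum_congr rfl
    intro i _
    congr 1
    ext x
    simp [Fin.ext_iff]
  · intro i _
    obtain ⟨x, hx⟩ := f.2.2.1 (i : ℕ) i.2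
    refine ⟨bIdx hsum x, Finset.card_pos.2 ⟨⟨bOff (μ := μ) x, bOff_lt hsum x⟩, ?_⟩⟩
    rw [Finset.mem_filter]
    refine ⟨mem_univ _, ?_⟩
    rw [embV_bIdx hsum x]
    exact hx
  · intro i hi
    exact absurd (mem_univ i) hi

/-- reconstructing the function from the matrix -/
noncomputable def matToFib (M : MatOn p k μ (univ : Finset (Fin k))) : FibT p n k μ := by
  classical
  refine ⟨fun y => idxOf k (M.1 (bIdx hsum y)) (bOff (μ := μ) y), ?_, ?_, ?_⟩
  · intro y
    exact (idxOf_lt (M.1 (bIdx hsum y)) (by rw [M.2.1]; exact bOff_lt hsum y)).1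
  · intro i hik
    obtain ⟨j, hj⟩ := M.2.2.1 ⟨i, hik⟩ (mem_univ _)
    have hcard := idxOf_fiber_card (m := μ j) (M.1 j) (by rw [M.2.1]) ⟨i, hik⟩
    have hpos : 0 < (univ.filter
        (fun x : Fin (μ j) => idxOf k (M.1 j) (x : ℕ) = i)).card := by
      rw [hcard]; exact hj
    obtain ⟨x₀, hx₀⟩ := Finset.card_pos.1 hpos
    rw [Finset.mem_filter] at hx₀
    refine ⟨embV hsum j x₀, ?_⟩
    show idxOf k (M.1 (bIdx hsum (embV hsum j x₀))) (bOff (μ := μ) (embV hsum j x₀)) = i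
    rw [bIdx_embV hsum j x₀, bOff_embV hsum j x₀]
    exact hx₀.2
  · intro a b hab hlt
    have hba : bIdx hsum a = bIdx hsum b := Fin.ext hab
    show idxOf k (M.1 (bIdx hsum a)) (bOff (μ := μ) a)
      ≤ idxOf k (M.1 (bIdx hsum b)) (bOff (μ := μ) b)
    rw [hba]
    apply idxOf_mono
    · show bOff (μ := μ) a ≤ bOff (μ := μ) b
      have hab' : idxOf p μ (a : ℕ) = idxOf p μ (b : ℕ) := hab
      rw [bOff, bOff, hab']
      omega
    · rw [M.2.1]
      exact bOff_lt hsum b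

lemma matToFib_fibToMat (f : FibT p n k μ) : matToFib hsum (fibToMat hsum f) = f := by
  classical
  apply Subtype.ext
  funext y
  show idxOf k ((fibToMat hsum f).1 (bIdx hsum y)) (bOff (μ := μ) y) = f.1 y
  set j := bIdx hsum y with hj
  have hmono : ∀ x x' : Fin (μ j), x ≤ x' →
      f.1 (embV hsum j x) ≤ f.1 (embV hsum j x') := by
    intro x x' hxx
    rcases eq_or_lt_of_le hxx with h | h
    · rw [h]
    · apply f.2.2.2
      · exact (idxOf_embV hsum j x).trans (idxOf_embV hsum j x').symm
      · show pSum p μ (j : ℕ) + (x : ℕ) < pSum p μ (j : ℕ) + (x' : ℕ)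
        omega
  have hkey := monotone_eq_idxOf (k := k) (fun x : Fin (μ j) => f.1 (embV hsum j x))
    (fun x => f.2.1 _) hmono ⟨bOff (μ := μ) y, bOff_lt hsum y⟩
  rw [embV_bIdx hsum y] at hkey
  exact hkey.symm

lemma fibToMat_matToFib (M : MatOn p k μ (univ : Finset (Fin k))) :
    fibToMat hsum (matToFib hsum M) = M := by
  classical
  apply Subtype.ext
  funext j i
  show (univ.filter (fun x : Fin (μ j) =>
      (matToFib hsum M).1 (embV hsum j x) = (i : ℕ))).card = M.1 j i
  have hval : ∀ x : Fin (μ j),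
      (matToFib hsum M).1 (embV hsum j x) = idxOf k (M.1 j) (x : ℕ) := by
    intro x
    show idxOf k (M.1 (bIdx hsum (embV hsum j x))) (bOff (μ := μ) (embV hsum j x))
      = idxOf k (M.1 j) (x : ℕ)
    rw [bIdx_embV hsum j x, bOff_embV hsum j x]
  rw [Finset.filter_congr (fun x _ => by rw [hval x])]
  exact idxOf_fiber_card (M.1 j) (by rw [M.2.1]) i

lemma nat_card_fibT (hsum : ∑ j, μ j = n) (k : ℕ) :
    Nat.card (FibT p n k μ) = Nat.card (MatOn p k μ (univ : Finset (Fin k))) :=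
  Nat.card_congr ⟨fibToMat hsum, matToFib hsum, matToFib_fibToMat hsum, fibToMat_matToFib hsum⟩

instance : Finite (FibT p n k μ) := by
  apply Finite.of_injective
    (f := fun (f : FibT p n k μ) (x : Fin n) => (⟨min (f.1 x) k, by omega⟩ : Fin (k + 1)))
  intro f g h
  apply Subtype.ext
  funext x
  have h1 := congrFun h x
  simp only [Fin.mk.injEq] at h1
  have h2 := f.2.1 x
  have h3 := g.2.1 x
  omega

end Batches

section ListPart
variable {p n : ℕ} (μ : Fin p → ℕ)

lemma findIdx_ofFn_eq {k : ℕ} (f : Fin n → ℕ) (hf : ∀ x, f x < k) (x : Fin n) :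
    (List.ofFn (fun i : Fin k => univ.filter (fun y => f y = (i : ℕ)))).findIdx
      (fun B => decide (x ∈ B)) = f x := by
  have hlen : f x
      < (List.ofFn (fun i : Fin k => univ.filter (fun y => f y = (i : ℕ)))).length := by
    simpa using hf x
  rw [List.findIdx_eq hlen]
  constructor
  · rw [List.getElem_ofFn]
    simp
  · intro j hj
    rw [List.getElem_ofFn]
    simp only [decide_eq_false_iff_not, Finset.mem_filter, mem_univ, true_and]
    intro h
    omega

lemma findIdx_eq_of_mem {L : List (Finset (Fin n))} (hdisj : L.Pairwise Disjoint)
    {i : ℕ} (hi : i < L.length) {x : Fin n} (hx : x ∈ L[i]) :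
    L.findIdx (fun B => decide (x ∈ B)) = i := by
  rw [List.findIdx_eq hi]
  refine ⟨by simpa using hx, ?_⟩
  intro j hj
  have hd : Disjoint (L.get ⟨j, by omega⟩) (L.get ⟨i, hi⟩) :=
    List.pairwise_iff_get.1 hdisj ⟨j, by omega⟩ ⟨i, hi⟩ hj
  simp only [List.get_eq_getElem] at hd
  simp only [decide_eq_false_iff_not]
  intro hxj
  exact Finset.disjoint_left.1 hd hxj hx

/-- an ordered set partition, batch-monotone, as a bounded surjective function -/
def listEquiv :
    {L : List (Finset (Fin n)) //
      (∀ B ∈ L, B.Nonempty) ∧ L.Pairwise Disjoint ∧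
      (∀ x : Fin n, ∃ B ∈ L, x ∈ B) ∧
      (∀ a b : Fin n, batchOf p μ (a : ℕ) = batchOf p μ (b : ℕ) → (a : ℕ) < (b : ℕ) →
        L.findIdx (fun B => decide (a ∈ B)) ≤ L.findIdx (fun B => decide (b ∈ B)))}
    ≃ {kf : Fin (n + 1) × (Fin n → ℕ) //
        (∀ x, kf.2 x < (kf.1 : ℕ)) ∧ (∀ i, i < (kf.1 : ℕ) → ∃ x, kf.2 x = i) ∧
        (∀ a b : Fin n, batchOf p μ (a : ℕ) = batchOf p μ (b : ℕ) → (a : ℕ) < (b : ℕ) →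
          kf.2 a ≤ kf.2 b)} := by
  classical
  refine
    { toFun := fun L => ⟨(⟨L.1.length, ?_⟩, fun x => L.1.findIdx (fun B => decide (x ∈ B))),
        ?_, ?_, ?_⟩
      invFun := fun T => ⟨List.ofFn
          (fun i : Fin ((T.1.1 : ℕ)) => univ.filter (fun x => T.1.2 x = (i : ℕ))), ?_, ?_, ?_, ?_⟩
      left_inv := ?_
      right_inv := ?_ }
  case refine_1 =>
    -- length ≤ n
    have hlt : ∀ x : Fin n, L.1.findIdx (fun B => decide (x ∈ B)) < L.1.length := by
      intro x
      obtain ⟨B, hB, hxB⟩ := L.2.2.2.1 x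
      exact List.findIdx_lt_length_of_exists ⟨B, hB, by simpa using hxB⟩
    have hsurj : Function.Surjective
        (fun x : Fin n => (⟨L.1.findIdx (fun B => decide (x ∈ B)), hlt x⟩ : Fin L.1.length)) := by
      intro ⟨i, hi⟩
      obtain ⟨a, ha⟩ := L.2.1 L.1[i] (L.1.getElem_mem hi)
      exact ⟨a, Fin.ext (findIdx_eq_of_mem L.2.2.1 hi ha)⟩
    have := Fintype.card_le_of_surjective _ hsurj
    simp only [Fintype.card_fin] at this
    omega
  case refine_2 =>
    intro x
    obtain ⟨B, hB, hxB⟩ := L.2.2.2.1 x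
    exact List.findIdx_lt_length_of_exists ⟨B, hB, by simpa using hxB⟩
  case refine_3 =>
    intro i hi
    obtain ⟨a, ha⟩ := L.2.1 L.1[i] (L.1.getElem_mem hi)
    exact ⟨a, findIdx_eq_of_mem L.2.2.1 hi ha⟩
  case refine_4 =>
    exact L.2.2.2.2
  case refine_5 =>
    intro B hB
    rw [List.mem_ofFn] at hB
    obtain ⟨i, rfl⟩ := hB
    obtain ⟨x, hx⟩ := T.2.2.1 (i : ℕ) i.2
    exact ⟨x, Finset.mem_filter.2 ⟨mem_univ x, hx⟩⟩
  case refine_6 =>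
    rw [List.pairwise_iff_get]
    intro i j hij
    rw [List.get_ofFn, List.get_ofFn]
    rw [Finset.disjoint_left]
    intro x hx1 hx2
    rw [Finset.mem_filter] at hx1 hx2
    have h1 := hx1.2
    have h2 := hx2.2
    have : (i : ℕ) = (j : ℕ) := by
      rw [show ((Fin.cast (by simp) i : Fin ((T.1.1 : ℕ))) : ℕ) = (i : ℕ) from rfl] at h1
      rw [show ((Fin.cast (by simp) j : Fin ((T.1.1 : ℕ))) : ℕ) = (j : ℕ) from rfl] at h2
      omega
    have : i = j := Fin.ext this
    exact absurd this (Fin.ne_of_lt hij)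
  case refine_7 =>
    intro x
    refine ⟨univ.filter (fun y => T.1.2 y = ((⟨T.1.2 x, T.2.1 x⟩ : Fin (T.1.1 : ℕ)) : ℕ)), ?_, ?_⟩
    · rw [List.mem_ofFn]
      exact ⟨⟨T.1.2 x, T.2.1 x⟩, rfl⟩
    · exact Finset.mem_filter.2 ⟨mem_univ x, rfl⟩
  case refine_8 =>
    intro a b hab hlt
    rw [findIdx_ofFn_eq T.1.2 T.2.1 a, findIdx_ofFn_eq T.1.2 T.2.1 b]
    exact T.2.2.2 a b hab hlt
  case refine_9 =>
    intro L
    apply Subtype.ext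
    apply List.ext_getElem
    · simp [List.length_ofFn]
    · intro i h1 h2
      rw [List.getElem_ofFn]
      ext x
      simp only [Finset.mem_filter, mem_univ, true_and]
      constructor
      · intro hfi
        have hfi' : L.1.findIdx (fun B => decide (x ∈ B)) = i := hfi
        obtain ⟨B, hB, hxB⟩ := L.2.2.2.1 x
        obtain ⟨i₀, hi₀, hBeq⟩ := List.mem_iff_getElem.1 hB
        have hf0 := findIdx_eq_of_mem L.2.2.1 hi₀ (hBeq ▸ hxB)
        have hii : i₀ = i := by omega
        subst hii
        exact hBeq ▸ hxB
      · intro hxi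
        exact findIdx_eq_of_mem L.2.2.1 h2 hxi
  case refine_10 =>
    intro T
    apply Subtype.ext
    refine Prod.ext ?_ ?_
    · apply Fin.ext
      show (List.ofFn (fun i : Fin ((T.1.1 : ℕ)) =>
        univ.filter (fun x => T.1.2 x = (i : ℕ)))).length = (T.1.1 : ℕ)
      simp
    · funext x
      exact findIdx_ofFn_eq T.1.2 T.2.1 x
end ListPart

end OPAux


open OPAux Finset in
/-- For a partition `μ = (μ_1,…,μ_p)` of `n`, the number of ordered set
partitions of `[n]` in which the entries of each batch appear in increasing
order from left to right equals
`∑_{0 ≤ γ ≤ μ} ∏_j C((μ_1-γ_1)+⋯+(μ_j-γ_j), μ_j-γ_j) ·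
 C((μ_1-γ_1)+⋯+(μ_{j-1}-γ_{j-1})+μ_j-1, γ_j)`. -/
theorem card_batch_increasing_ordered_set_partitions
    (n p : ℕ) (μ : Fin p → ℕ)
    (hpos : ∀ j, 0 < μ j) (hmono : Antitone μ) (hsum : ∑ j, μ j = n) :
    Nat.card {L : List (Finset (Fin n)) //
      (∀ B ∈ L, B.Nonempty) ∧ L.Pairwise Disjoint ∧
      (∀ x : Fin n, ∃ B ∈ L, x ∈ B) ∧
      (∀ a b : Fin n, batchOf p μ (a : ℕ) = batchOf p μ (b : ℕ) → (a : ℕ) < (b : ℕ) →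
        L.findIdx (fun B => decide (a ∈ B)) ≤ L.findIdx (fun B => decide (b ∈ B)))}
    = ∑ γ : (j : Fin p) → Fin (μ j + 1),
        ∏ j : Fin p,
          Nat.choose (∑ l ∈ Finset.univ.filter (fun l : Fin p => l ≤ j), (μ l - (γ l : ℕ)))
              (μ j - (γ j : ℕ)) *
            Nat.choose
              ((∑ l ∈ Finset.univ.filter (fun l : Fin p => l < j), (μ l - (γ l : ℕ)))
                + μ j - 1)
              (γ j : ℕ) := by
  classical
  rw [Nat.card_congr ((OPAux.listEquiv (p := p) (n := n) μ).trans
    (Equiv.subtypeProdEquivSigmaSubtype (fun (k : Fin (n + 1)) (f : Fin n → ℕ) =>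
      (∀ x, f x < (k : ℕ)) ∧ (∀ i, i < (k : ℕ) → ∃ x, f x = i) ∧
      (∀ a b : Fin n, batchOf p μ (a : ℕ) = batchOf p μ (b : ℕ) → (a : ℕ) < (b : ℕ) →
        f a ≤ f b))))]
  haveI : ∀ k : Fin (n + 1), Finite {f : Fin n → ℕ //
      (∀ x, f x < (k : ℕ)) ∧ (∀ i, i < (k : ℕ) → ∃ x, f x = i) ∧
      (∀ a b : Fin n, batchOf p μ (a : ℕ) = batchOf p μ (b : ℕ) → (a : ℕ) < (b : ℕ) →
        f a ≤ f b)} :=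
    fun k => (inferInstance : Finite (OPAux.FibT p n (k : ℕ) μ))
  rw [OPAux.nat_card_sigma]
  have hstep : ∀ k : Fin (n + 1),
      Nat.card {f : Fin n → ℕ //
        (∀ x, f x < (k : ℕ)) ∧ (∀ i, i < (k : ℕ) → ∃ x, f x = i) ∧
        (∀ a b : Fin n, batchOf p μ (a : ℕ) = batchOf p μ (b : ℕ) → (a : ℕ) < (b : ℕ) →
          f a ≤ f b)}
      = ∑ γ : (j : Fin p) → Fin (μ j + 1),
          if (∑ j, (μ j - (γ j : ℕ))) = (k : ℕ) then
            ∏ j, ((∑ l ∈ univ.filter (fun l => l ≤ j), (μ l - (γ l : ℕ))).choose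
                (μ j - (γ j : ℕ)) *
              ((∑ l ∈ univ.filter (fun l => l < j), (μ l - (γ l : ℕ))) + μ j - 1).choose
                (γ j : ℕ))
          else 0 := by
    intro k
    rw [show Nat.card {f : Fin n → ℕ //
        (∀ x, f x < (k : ℕ)) ∧ (∀ i, i < (k : ℕ) → ∃ x, f x = i) ∧
        (∀ a b : Fin n, batchOf p μ (a : ℕ) = batchOf p μ (b : ℕ) → (a : ℕ) < (b : ℕ) →
          f a ≤ f b)} = Nat.card (OPAux.FibT p n (k : ℕ) μ) from rfl]
    rw [OPAux.nat_card_fibT hsum (k : ℕ), OPAux.matOn_card p μ hpos (k : ℕ)]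
  rw [Finset.sum_congr rfl (fun k _ => hstep k)]
  rw [Finset.sum_comm]
  apply Finset.sum_congr rfl
  intro γ _
  rw [Finset.sum_eq_single (⟨∑ j, (μ j - (γ j : ℕ)), by
      have h1 : ∑ j, (μ j - (γ j : ℕ)) ≤ ∑ j, μ j :=
        Finset.sum_le_sum (fun j _ => by omega)
      omega⟩ : Fin (n + 1))]
  · rw [if_pos rfl]
  · intro b _ hb
    exact if_neg (fun hc => hb (Fin.ext hc.symm))
  · intro h
    exact absurd (Finset.mem_univ _) h
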